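/- Let A = B(V)#K[Γ] for V a quantum plane with χ_1χ_2 = ε and q = χ_1(g_1). If γ is an H-bilinear H-balanced 2-cocycle on A and q^{i+k} ≠ q^{j+l}, then γ(x_1^i x_2^j ⊗ x_1^k x_2^l) = 0, and likewise γ^{-1}(x_1^i x_2^j ⊗ x_1^k x_2^l) = 0. -/

import Mathlib

open TensorProduct Coalgebra

set_option autoImplicit false
universe u
variable {K A : Type u} [Field K] [CharZero K] [Ring A] [Bialgebra K A]

/-- Convolution product of two `K`-valued linear maps on a coalgebra. -/
noncomputable def conv {C : Type u} [AddCommGroup C] [Module K C] [Coalgebra K C]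
    (f g : C →ₗ[K] K) : C →ₗ[K] K :=
  (LinearMap.mul' K K) ∘ₗ (TensorProduct.map f g) ∘ₗ Coalgebra.comul

/-- Convolution product of two `A`-valued linear maps on the coalgebra `A ⊗ A`. -/
noncomputable def convMap (f g : A ⊗[K] A →ₗ[K] A) : A ⊗[K] A →ₗ[K] A :=
  (LinearMap.mul' K A) ∘ₗ (TensorProduct.map f g) ∘ₗ Coalgebra.comul

/-- `x ⊗ y ⊗ z ↦ γ(y₍₁₎ ⊗ z₍₁₎) γ(x ⊗ y₍₂₎z₍₂₎)`: the left side of the 2-cocycle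
identity, for the multiplication `m`. -/
noncomputable def cocycleL (m : A ⊗[K] A →ₗ[K] A) (γ : A ⊗[K] A →ₗ[K] K) :
    A ⊗[K] (A ⊗[K] A) →ₗ[K] K :=
  conv ((LinearMap.mul' K K) ∘ₗ TensorProduct.map Coalgebra.counit γ)
    (γ ∘ₗ TensorProduct.map LinearMap.id m)

/-- `x ⊗ y ⊗ z ↦ γ(x₍₁₎ ⊗ y₍₁₎) γ(x₍₂₎y₍₂₎ ⊗ z)`: the right side of the 2-cocycle
identity, for the multiplication `m`. -/
noncomputable def cocycleR (m : A ⊗[K] A →ₗ[K] A) (γ : A ⊗[K] A →ₗ[K] K) :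
    A ⊗[K] (A ⊗[K] A) →ₗ[K] K :=
  conv ((LinearMap.mul' K K) ∘ₗ TensorProduct.map γ Coalgebra.counit
      ∘ₗ (TensorProduct.assoc K A A A).symm.toLinearMap)
    (γ ∘ₗ TensorProduct.map m LinearMap.id ∘ₗ (TensorProduct.assoc K A A A).symm.toLinearMap)

/-- A normalized (unital) 2-cocycle with respect to a multiplication `m` on `A`. -/
noncomputable def IsNormalizedCocycleWith (m : A ⊗[K] A →ₗ[K] A)
    (γ : A ⊗[K] A →ₗ[K] K) : Prop :=
  cocycleL m γ = cocycleR m γ ∧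
    (∀ a : A, γ (a ⊗ₜ[K] 1) = Coalgebra.counit a ∧ γ ((1 : A) ⊗ₜ[K] a) = Coalgebra.counit a)

/-- Convolution invertibility of a `K`-valued map on `A ⊗ A`. -/
noncomputable def IsConvInvertible (γ : A ⊗[K] A →ₗ[K] K) : Prop :=
  ∃ γ' : A ⊗[K] A →ₗ[K] K, conv γ γ' = Coalgebra.counit ∧ conv γ' γ = Coalgebra.counit

/-- The twisted multiplication `γ ∗ m ∗ γ'` (where `γ'` is the convolution inverse
of `γ`). -/
noncomputable def mulTwist (m : A ⊗[K] A →ₗ[K] A) (γ γ' : A ⊗[K] A →ₗ[K] K) :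
    A ⊗[K] A →ₗ[K] A :=
  convMap (convMap ((Algebra.linearMap K A) ∘ₗ γ) m) ((Algebra.linearMap K A) ∘ₗ γ')

section ConvAux

variable {C : Type u} [AddCommGroup C] [Module K C] [Coalgebra K C]

lemma conv_apply_repr (f g : C →ₗ[K] K) {c : C} {ι : Type*} (repr : Coalgebra.Repr K c ι) :
    conv f g c = ∑ i ∈ repr.index, f (repr.left i) * g (repr.right i) := by
  simp only [conv, LinearMap.comp_apply, ← repr.eq, map_sum, TensorProduct.map_tmul,
    LinearMap.mul'_apply]

lemma conv_counit_left (f : C →ₗ[K] K) : conv Coalgebra.counit f = f := by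
  ext c
  have h : (Coalgebra.counit (R := K)).rTensor C (Coalgebra.comul c) = (1 : K) ⊗ₜ[K] c :=
    Coalgebra.rTensor_counit_comul c
  have h2 : TensorProduct.map (Coalgebra.counit (R := K) (A := C)) f
      = (f.lTensor K) ∘ₗ ((Coalgebra.counit (R := K)).rTensor C) :=
    (LinearMap.lTensor_comp_rTensor (f := Coalgebra.counit (R := K) (A := C)) (g := f)).symm
  simp only [conv, LinearMap.comp_apply, h2, h, LinearMap.lTensor_tmul,
    LinearMap.mul'_apply, one_mul]

lemma conv_counit_right (f : C →ₗ[K] K) : conv f Coalgebra.counit = f := by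
  ext c
  have h : (Coalgebra.counit (R := K)).lTensor C (Coalgebra.comul c) = c ⊗ₜ[K] (1 : K) :=
    Coalgebra.lTensor_counit_comul c
  have h2 : TensorProduct.map f (Coalgebra.counit (R := K) (A := C))
      = (f.rTensor K) ∘ₗ ((Coalgebra.counit (R := K)).lTensor C) :=
    (LinearMap.rTensor_comp_lTensor (f := f) (g := Coalgebra.counit (R := K) (A := C))).symm
  simp only [conv, LinearMap.comp_apply, h2, h, LinearMap.rTensor_tmul,
    LinearMap.mul'_apply, mul_one]

lemma conv_assoc (f g h : C →ₗ[K] K) : conv (conv f g) h = conv f (conv g h) := by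
  ext c
  have key := Coalgebra.sum_map_tmul_tmul_eq (R := K) f g h c
    (repr := ℛ K c) (a₁ := fun i => ℛ K ((ℛ K c).left i)) (a₂ := fun i => ℛ K ((ℛ K c).right i))
  have key2 := congrArg
    (fun x => ((LinearMap.mul' K K) ∘ₗ (LinearMap.lTensor K (LinearMap.mul' K K))) x) key
  simp only [map_sum, LinearMap.comp_apply, LinearMap.lTensor_tmul, LinearMap.mul'_apply] at key2
  rw [conv_apply_repr (conv f g) h (ℛ K c), conv_apply_repr f (conv g h) (ℛ K c)]
  calc ∑ i ∈ (ℛ K c).index, conv f g ((ℛ K c).left i) * h ((ℛ K c).right i)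
      = ∑ i ∈ (ℛ K c).index, ∑ j ∈ (ℛ K ((ℛ K c).left i)).index,
          f ((ℛ K ((ℛ K c).left i)).left j) *
            (g ((ℛ K ((ℛ K c).left i)).right j) * h ((ℛ K c).right i)) := by
        refine Finset.sum_congr rfl fun i _ => ?_
        rw [conv_apply_repr f g (ℛ K ((ℛ K c).left i)), Finset.sum_mul]
        exact Finset.sum_congr rfl fun j _ => by ring
    _ = ∑ i ∈ (ℛ K c).index, ∑ j ∈ (ℛ K ((ℛ K c).right i)).index,
          f ((ℛ K c).left i) *
            (g ((ℛ K ((ℛ K c).right i)).left j) * h ((ℛ K ((ℛ K c).right i)).right j)) :=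
        key2.symm
    _ = ∑ i ∈ (ℛ K c).index, f ((ℛ K c).left i) * conv g h ((ℛ K c).right i) := by
        refine Finset.sum_congr rfl fun i _ => ?_
        rw [conv_apply_repr g h (ℛ K ((ℛ K c).right i)), Finset.mul_sum]

lemma conv_inv_unique {m a b : C →ₗ[K] K}
    (ha : conv a m = Coalgebra.counit) (hb : conv m b = Coalgebra.counit) : a = b := by
  have h := conv_assoc a m b
  rw [ha, hb, conv_counit_left, conv_counit_right] at h
  exact h.symm

lemma conv_comp (f g : C →ₗ[K] K) (φ : C →ₗ[K] C)
    (hc : Coalgebra.comul ∘ₗ φ = TensorProduct.map φ φ ∘ₗ Coalgebra.comul) :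
    conv (f ∘ₗ φ) (g ∘ₗ φ) = conv f g ∘ₗ φ := by
  ext c
  have h := LinearMap.congr_fun hc c
  simp only [LinearMap.comp_apply] at h
  simp only [conv, LinearMap.comp_apply, h, TensorProduct.map_comp,
    LinearMap.comp_apply]

end ConvAux

/-- Let `A = B(V)#K[Γ]` for `V` a quantum plane with `χ₁χ₂ = ε` and
`q = χ₁(g₁)`.  If `γ` is an `H`-bilinear, `H`-balanced normalized 2-cocycle on `A` and
`q^{i+k} ≠ q^{j+l}`, then `γ(x₁^i x₂^j ⊗ x₁^k x₂^l) = 0`, and likewise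
`γ⁻¹(x₁^i x₂^j ⊗ x₁^k x₂^l) = 0`. -/
theorem stmt9 {Γ : Type u} [CommGroup Γ] [Fintype Γ] (grp : Γ →* A)
    (hgrp : ∀ u : Γ, Coalgebra.comul (R := K) (grp u) = grp u ⊗ₜ[K] grp u ∧
      Coalgebra.counit (R := K) (grp u) = 1)
    (x₁ x₂ : A) (g₁ g₂ : Γ) (χ₁ χ₂ : Γ →* K) (r : ℕ)
    (hx₁prim : Coalgebra.comul (R := K) x₁ = x₁ ⊗ₜ[K] (1 : A) + grp g₁ ⊗ₜ[K] x₁)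
    (hx₂prim : Coalgebra.comul (R := K) x₂ = x₂ ⊗ₜ[K] (1 : A) + grp g₂ ⊗ₜ[K] x₂)
    (hcnt₁ : Coalgebra.counit (R := K) x₁ = 0)
    (hcnt₂ : Coalgebra.counit (R := K) x₂ = 0)
    (hcomm₁ : ∀ u : Γ, grp u * x₁ = χ₁ u • (x₁ * grp u))
    (hcomm₂ : ∀ u : Γ, grp u * x₂ = χ₂ u • (x₂ * grp u))
    (hcompat : χ₁ g₂ * χ₂ g₁ = 1)
    (htriv : χ₁ * χ₂ = 1)
    (q : K) (hq : q = χ₁ g₁) (hprim : IsPrimitiveRoot q r)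
    (hbraid : x₁ * x₂ = χ₂ g₁ • (x₂ * x₁))
    (hnil₁ : x₁ ^ r = 0) (hnil₂ : x₂ ^ r = 0)
    (γ : A ⊗[K] A →ₗ[K] K)
    (hcoc : IsNormalizedCocycleWith (LinearMap.mul' K A) γ)
    (hbil : ∀ (u u' : Γ) (a b : A), γ ((grp u * a) ⊗ₜ[K] (b * grp u')) = γ (a ⊗ₜ[K] b))
    (hbal : ∀ (u : Γ) (a b : A), γ ((a * grp u) ⊗ₜ[K] b) = γ (a ⊗ₜ[K] (grp u * b))) :
    ∀ i j k l : ℕ, q ^ (i + k) ≠ q ^ (j + l) →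
      γ ((x₁ ^ i * x₂ ^ j) ⊗ₜ[K] (x₁ ^ k * x₂ ^ l)) = 0 ∧
      (∀ γ' : A ⊗[K] A →ₗ[K] K,
        conv γ γ' = Coalgebra.counit → conv γ' γ = Coalgebra.counit →
          γ' ((x₁ ^ i * x₂ ^ j) ⊗ₜ[K] (x₁ ^ k * x₂ ^ l)) = 0) := by
  classical
  -- basic scalar facts
  have hqq' : q * χ₂ g₁ = 1 := by
    rw [hq, ← MonoidHom.mul_apply, htriv, MonoidHom.one_apply]
  -- commutation of group elements with powers
  have hcomm₁' : ∀ (u : Γ) (n : ℕ), grp u * x₁ ^ n = (χ₁ u) ^ n • (x₁ ^ n * grp u) := by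
    intro u n
    induction n with
    | zero => simp
    | succ n ih =>
      rw [pow_succ, ← mul_assoc, ih, smul_mul_assoc, mul_assoc, hcomm₁ u, mul_smul_comm,
        smul_smul, pow_succ, ← mul_assoc]
  have hcomm₂' : ∀ (u : Γ) (n : ℕ), grp u * x₂ ^ n = (χ₂ u) ^ n • (x₂ ^ n * grp u) := by
    intro u n
    induction n with
    | zero => simp
    | succ n ih =>
      rw [pow_succ, ← mul_assoc, ih, smul_mul_assoc, mul_assoc, hcomm₂ u, mul_smul_comm,
        smul_smul, pow_succ, ← mul_assoc]
  have hcommg : ∀ (u : Γ) (m n : ℕ),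
      grp u * (x₁ ^ m * x₂ ^ n) = ((χ₁ u) ^ m * (χ₂ u) ^ n) • ((x₁ ^ m * x₂ ^ n) * grp u) := by
    intro u m n
    rw [← mul_assoc, hcomm₁' u m, smul_mul_assoc, mul_assoc, hcomm₂' u n, mul_smul_comm,
      smul_smul, mul_assoc]
  -- the main vanishing argument, for any H-bilinear H-balanced functional
  have main : ∀ δ : A ⊗[K] A →ₗ[K] K,
      (∀ (u u' : Γ) (a b : A), δ ((grp u * a) ⊗ₜ[K] (b * grp u')) = δ (a ⊗ₜ[K] b)) →
      (∀ (u : Γ) (a b : A), δ ((a * grp u) ⊗ₜ[K] b) = δ (a ⊗ₜ[K] (grp u * b))) →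
      ∀ i j k l : ℕ, q ^ (i + k) ≠ q ^ (j + l) →
        δ ((x₁ ^ i * x₂ ^ j) ⊗ₜ[K] (x₁ ^ k * x₂ ^ l)) = 0 := by
    intro δ Hbil Hbal i j k l hne
    by_contra h0
    set a : A := x₁ ^ i * x₂ ^ j with ha
    set b : A := x₁ ^ k * x₂ ^ l with hb
    have E0 : δ (a ⊗ₜ[K] (b * grp g₁)) = δ (a ⊗ₜ[K] b) := by
      have := Hbil 1 g₁ a b
      rwa [map_one, one_mul] at this
    have E1 : δ ((a * grp g₁) ⊗ₜ[K] b) = (χ₁ g₁ ^ k * χ₂ g₁ ^ l) * δ (a ⊗ₜ[K] b) := by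
      rw [Hbal g₁ a b, hcommg g₁ k l, TensorProduct.tmul_smul, map_smul, smul_eq_mul, E0]
    have E2 : δ ((grp g₁ * a) ⊗ₜ[K] b) = δ (a ⊗ₜ[K] b) := by
      have := Hbil g₁ 1 a b
      rwa [map_one, mul_one] at this
    have E3 : δ ((grp g₁ * a) ⊗ₜ[K] b)
        = (χ₁ g₁ ^ i * χ₂ g₁ ^ j) * ((χ₁ g₁ ^ k * χ₂ g₁ ^ l) * δ (a ⊗ₜ[K] b)) := by
      rw [hcommg g₁ i j, ← TensorProduct.smul_tmul', map_smul, smul_eq_mul, E1]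
    have E4 : δ (a ⊗ₜ[K] b) = ((q ^ (i + k)) * ((χ₂ g₁) ^ (j + l))) * δ (a ⊗ₜ[K] b) :=
      calc δ (a ⊗ₜ[K] b)
          = χ₁ g₁ ^ i * χ₂ g₁ ^ j * (χ₁ g₁ ^ k * χ₂ g₁ ^ l * δ (a ⊗ₜ[K] b)) := E2.symm.trans E3
        _ = ((q ^ (i + k)) * ((χ₂ g₁) ^ (j + l))) * δ (a ⊗ₜ[K] b) := by
            rw [hq, pow_add, pow_add]; ring
    have E5 : (q ^ (i + k)) * ((χ₂ g₁) ^ (j + l)) = 1 := by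
      have := E4.symm
      rw [← one_mul (δ (a ⊗ₜ[K] b))] at this
      nth_rewrite 2 [← one_mul (δ (a ⊗ₜ[K] b))] at this
      exact mul_right_cancel₀ h0 (by linear_combination this)
    apply hne
    calc q ^ (i + k) = q ^ (i + k) * ((χ₂ g₁ * q) ^ (j + l)) := by
          rw [mul_comm (χ₂ g₁) q, hqq', one_pow, mul_one]
      _ = (q ^ (i + k) * (χ₂ g₁) ^ (j + l)) * q ^ (j + l) := by rw [mul_pow]; ring
      _ = q ^ (j + l) := by rw [E5, one_mul]
  refine fun i j k l hne => ⟨main γ hbil hbal i j k l hne, ?_⟩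
  intro γ' hγγ' hγ'γ
  -- multiplication by grouplikes in tensor factors
  have hmapmulL : ∀ (g g' : A) (x : A ⊗[K] A),
      TensorProduct.map (LinearMap.mulLeft K g) (LinearMap.mulLeft K g') x
        = (g ⊗ₜ[K] g') * x := by
    intro g g' x
    induction x using TensorProduct.induction_on with
    | zero => simp
    | tmul a b => simp [Algebra.TensorProduct.tmul_mul_tmul]
    | add y z hy hz => simp only [map_add, mul_add, hy, hz]
  have hmapmulR : ∀ (g g' : A) (x : A ⊗[K] A),
      TensorProduct.map (LinearMap.mulRight K g) (LinearMap.mulRight K g') x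
        = x * (g ⊗ₜ[K] g') := by
    intro g g' x
    induction x using TensorProduct.induction_on with
    | zero => simp
    | tmul a b => simp [Algebra.TensorProduct.tmul_mul_tmul]
    | add y z hy hz => simp only [map_add, add_mul, hy, hz]
  -- mulLeft / mulRight by grouplikes are coalgebra endomorphisms of A
  have hLc : ∀ u : Γ, Coalgebra.comul ∘ₗ LinearMap.mulLeft K (grp u)
      = TensorProduct.map (LinearMap.mulLeft K (grp u)) (LinearMap.mulLeft K (grp u))
          ∘ₗ Coalgebra.comul := by
    intro u; ext x
    simp only [LinearMap.comp_apply, LinearMap.mulLeft_apply, Bialgebra.comul_mul,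
      (hgrp u).1, hmapmulL]
  have hRc : ∀ u : Γ, Coalgebra.comul ∘ₗ LinearMap.mulRight K (grp u)
      = TensorProduct.map (LinearMap.mulRight K (grp u)) (LinearMap.mulRight K (grp u))
          ∘ₗ Coalgebra.comul := by
    intro u; ext x
    simp only [LinearMap.comp_apply, LinearMap.mulRight_apply, Bialgebra.comul_mul,
      (hgrp u).1, hmapmulR]
  have hLe : ∀ u : Γ, Coalgebra.counit ∘ₗ LinearMap.mulLeft K (grp u)
      = (Coalgebra.counit : A →ₗ[K] K) := by
    intro u; ext x
    simp only [LinearMap.comp_apply, LinearMap.mulLeft_apply, Bialgebra.counit_mul,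
      (hgrp u).2, one_mul]
  have hRe : ∀ u : Γ, Coalgebra.counit ∘ₗ LinearMap.mulRight K (grp u)
      = (Coalgebra.counit : A →ₗ[K] K) := by
    intro u; ext x
    simp only [LinearMap.comp_apply, LinearMap.mulRight_apply, Bialgebra.counit_mul,
      (hgrp u).2, mul_one]
  -- naturality of tensorTensorTensorComm
  have hnat : ∀ (F F' G G' : A →ₗ[K] A),
      (TensorProduct.tensorTensorTensorComm K A A A A).toLinearMap
          ∘ₗ TensorProduct.map (TensorProduct.map F F') (TensorProduct.map G G')
      = TensorProduct.map (TensorProduct.map F G) (TensorProduct.map F' G')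
          ∘ₗ (TensorProduct.tensorTensorTensorComm K A A A A).toLinearMap := by
    intro F F' G G'
    ext a b c d
    simp [TensorProduct.tensorTensorTensorComm_tmul]
  -- tensor product of coalgebra endomorphisms is a coalgebra endomorphism of A ⊗ A
  have htensor : ∀ F G : A →ₗ[K] A,
      Coalgebra.comul ∘ₗ F = TensorProduct.map F F ∘ₗ Coalgebra.comul →
      Coalgebra.comul ∘ₗ G = TensorProduct.map G G ∘ₗ Coalgebra.comul →
      Coalgebra.comul ∘ₗ TensorProduct.map F G
        = TensorProduct.map (TensorProduct.map F G) (TensorProduct.map F G)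
            ∘ₗ Coalgebra.comul := by
    intro F G hF hG
    have hdef : (Coalgebra.comul : A ⊗[K] A →ₗ[K] (A ⊗[K] A) ⊗[K] (A ⊗[K] A))
        = (TensorProduct.tensorTensorTensorComm K A A A A).toLinearMap
            ∘ₗ TensorProduct.map Coalgebra.comul Coalgebra.comul := rfl
    rw [hdef, LinearMap.comp_assoc, ← TensorProduct.map_comp, hF, hG,
      TensorProduct.map_comp, ← LinearMap.comp_assoc, hnat, LinearMap.comp_assoc]
  have htensorε : ∀ F G : A →ₗ[K] A,
      Coalgebra.counit ∘ₗ F = (Coalgebra.counit : A →ₗ[K] K) →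
      Coalgebra.counit ∘ₗ G = (Coalgebra.counit : A →ₗ[K] K) →
      Coalgebra.counit ∘ₗ TensorProduct.map F G
        = (Coalgebra.counit : A ⊗[K] A →ₗ[K] K) := by
    intro F G hF hG
    have hdef : (Coalgebra.counit : A ⊗[K] A →ₗ[K] K)
        = LinearMap.mul' K K ∘ₗ TensorProduct.map Coalgebra.counit Coalgebra.counit :=
      TensorProduct.ext' fun a b => by simp [mul_comm]
    rw [hdef, LinearMap.comp_assoc, ← TensorProduct.map_comp, hF, hG]
  -- transport identities from γ to γ'
  have transport : ∀ φ ψ : A ⊗[K] A →ₗ[K] (A ⊗[K] A),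
      Coalgebra.comul ∘ₗ φ = TensorProduct.map φ φ ∘ₗ Coalgebra.comul →
      Coalgebra.counit ∘ₗ φ = (Coalgebra.counit : A ⊗[K] A →ₗ[K] K) →
      Coalgebra.comul ∘ₗ ψ = TensorProduct.map ψ ψ ∘ₗ Coalgebra.comul →
      Coalgebra.counit ∘ₗ ψ = (Coalgebra.counit : A ⊗[K] A →ₗ[K] K) →
      γ ∘ₗ φ = γ ∘ₗ ψ → γ' ∘ₗ φ = γ' ∘ₗ ψ := by
    intro φ ψ hφc hφe hψc hψe hγφψ
    have ha : conv (γ' ∘ₗ φ) (γ ∘ₗ ψ) = Coalgebra.counit := by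
      rw [← hγφψ, conv_comp _ _ _ hφc, hγ'γ, hφe]
    have hb : conv (γ ∘ₗ ψ) (γ' ∘ₗ ψ) = Coalgebra.counit := by
      rw [conv_comp _ _ _ hψc, hγγ', hψe]
    exact conv_inv_unique ha hb
  -- identity map is a coalgebra endomorphism
  have hidc : Coalgebra.comul ∘ₗ (LinearMap.id : A ⊗[K] A →ₗ[K] A ⊗[K] A)
      = TensorProduct.map LinearMap.id LinearMap.id ∘ₗ Coalgebra.comul := by
    rw [TensorProduct.map_id]; rfl
  have hide : Coalgebra.counit ∘ₗ (LinearMap.id : A ⊗[K] A →ₗ[K] A ⊗[K] A)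
      = (Coalgebra.counit : A ⊗[K] A →ₗ[K] K) := rfl
  have hidA : Coalgebra.comul ∘ₗ (LinearMap.id : A →ₗ[K] A)
      = TensorProduct.map LinearMap.id LinearMap.id ∘ₗ Coalgebra.comul := by
    rw [TensorProduct.map_id]; rfl
  have hidAe : Coalgebra.counit ∘ₗ (LinearMap.id : A →ₗ[K] A)
      = (Coalgebra.counit : A →ₗ[K] K) := rfl
  -- γ' is H-bilinear
  have hbil' : ∀ (u u' : Γ) (a b : A), γ' ((grp u * a) ⊗ₜ[K] (b * grp u')) = γ' (a ⊗ₜ[K] b) := by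
    intro u u' a b
    have hmap : γ' ∘ₗ TensorProduct.map (LinearMap.mulLeft K (grp u))
          (LinearMap.mulRight K (grp u'))
        = γ' ∘ₗ LinearMap.id := by
      refine transport _ _ (htensor _ _ (hLc u) (hRc u')) (htensorε _ _ (hLe u) (hRe u'))
        hidc hide ?_
      apply TensorProduct.ext'
      intro a b
      simpa using hbil u u' a b
    simpa using LinearMap.congr_fun hmap (a ⊗ₜ[K] b)
  -- γ' is H-balanced
  have hbal' : ∀ (u : Γ) (a b : A), γ' ((a * grp u) ⊗ₜ[K] b) = γ' (a ⊗ₜ[K] (grp u * b)) := by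
    intro u a b
    have hmap : γ' ∘ₗ TensorProduct.map (LinearMap.mulRight K (grp u)) LinearMap.id
        = γ' ∘ₗ TensorProduct.map LinearMap.id (LinearMap.mulLeft K (grp u)) := by
      refine transport _ _ (htensor _ _ (hRc u) hidA) (htensorε _ _ (hRe u) hidAe)
        (htensor _ _ hidA (hLc u)) (htensorε _ _ hidAe (hLe u)) ?_
      apply TensorProduct.ext'
      intro a b
      simpa using hbal u a b
    simpa using LinearMap.congr_fun hmap (a ⊗ₜ[K] b)
  exact main γ' hbil' hbal' i j k l hne
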